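/- Let λ > 0 be real, let R be a positive even integer, and let a₀, a₁, …, a_R be real numbers in [1/(1+λ), 1] satisfying a_i ≥ 1/(1 + λ·a_{i+1}) for all 0 ≤ i < R. Define M(λ) = 1 − (2/λ)(√(1+λ) − 1) if λ ≥ (1+√5)/2 and M(λ) = λ²/((1+λ)(1+2λ)) if λ < (1+√5)/2. Then ∏_{i=0}^{R−1} (1 − a_i) ≤ M(λ)^{R/2}. -/

import Mathlib

/-- Let `λ > 0`, `R` a positive even integer, and `a₀, …, a_R ∈ [1/(1+λ), 1]`
with `a i ≥ 1/(1 + λ a (i+1))` for all `i < R`.  With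
`M(λ) = 1 − (2/λ)(√(1+λ) − 1)` if `λ ≥ (1+√5)/2` and
`M(λ) = λ²/((1+λ)(1+2λ))` otherwise, we have
`∏_{i<R} (1 − a i) ≤ M(λ)^(R/2)`. -/
theorem stmt10 (l : ℝ) (hl : 0 < l) (R : ℕ) (hR : 0 < R) (hRe : Even R)
    (a : ℕ → ℝ) (ha : ∀ i ≤ R, a i ∈ Set.Icc (1 / (1 + l)) (1 : ℝ))
    (hrec : ∀ i < R, a i ≥ 1 / (1 + l * a (i + 1))) :
    ∏ i ∈ Finset.range R, (1 - a i) ≤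
      (if (1 + Real.sqrt 5) / 2 ≤ l then 1 - (2 / l) * (Real.sqrt (1 + l) - 1)
       else l ^ 2 / ((1 + l) * (1 + 2 * l))) ^ (R / 2) := by
  have hl1 : (0:ℝ) < 1 + l := by linarith
  set M : ℝ := if (1 + Real.sqrt 5) / 2 ≤ l then 1 - (2 / l) * (Real.sqrt (1 + l) - 1)
       else l ^ 2 / ((1 + l) * (1 + 2 * l)) with hM
  -- Key pointwise bound
  have key : ∀ b : ℝ, 1/(1+l) ≤ b → b ≤ 1 → l*b*(1-b)/(1+l*b) ≤ M := by
    intro b hb1 hb2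
    have hb0 : 0 < b := lt_of_lt_of_le (by positivity) hb1
    have hden : 0 < 1 + l*b := by nlinarith
    rw [div_le_iff₀ hden, hM]
    split_ifs with h
    · set s := Real.sqrt (1+l) with hs
      have hs2 : s^2 = 1+l := Real.sq_sqrt (by linarith)
      have hs0 : 0 ≤ s := Real.sqrt_nonneg _
      have hrw : (1:ℝ) - 2/l*(s-1) = (s-1)^2/l := by
        field_simp
        nlinarith [hs2]
      rw [hrw, div_mul_eq_mul_div, le_div_iff₀ hl]
      nlinarith [sq_nonneg (s - 1 - l*b), hs2]
    · push_neg at h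
      have h5 : Real.sqrt 5 ^ 2 = 5 := Real.sq_sqrt (by norm_num)
      have h5n : (0:ℝ) ≤ Real.sqrt 5 := Real.sqrt_nonneg 5
      have hA : 0 < Real.sqrt 5 - (2*l-1) := by linarith
      have hB : 0 < Real.sqrt 5 + (2*l-1) := by nlinarith
      have hl2 : l^2 < l + 1 := by nlinarith [mul_pos hA hB]
      have hb1' : 1 ≤ (1+l)*b := by
        rw [div_le_iff₀ hl1] at hb1; linarith [hb1]
      have h1 : (0:ℝ) ≤ (1+l)*b - 1 := by linarith
      have h2 : (0:ℝ) ≤ (1+2*l)*b - l := by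
        nlinarith [mul_nonneg (show (0:ℝ) ≤ 1+2*l by linarith) h1]
      rw [div_mul_eq_mul_div, le_div_iff₀ (by positivity)]
      nlinarith [mul_nonneg (mul_nonneg hl.le h1) h2]
  have hM0 : 0 ≤ M := by
    refine le_trans ?_ (key (1/(1+l)) le_rfl (by rw [div_le_one hl1]; linarith))
    have hb : (0:ℝ) ≤ 1/(1+l) := by positivity
    have hb1 : 1/(1+l) ≤ 1 := by rw [div_le_one hl1]; linarith
    have : (0:ℝ) < 1 + l * (1/(1+l)) := by positivity
    apply div_nonneg _ this.le
    apply mul_nonneg (mul_nonneg hl.le hb) (by linarith)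
  -- Pair bound
  have pair : ∀ i, i + 1 ≤ R → (1 - a i) * (1 - a (i+1)) ≤ M := by
    intro i hi
    obtain ⟨hb1, hb2⟩ := ha (i+1) hi
    obtain ⟨ha1, ha2⟩ := ha i (by omega)
    have hrec' := hrec i (by omega)
    set b := a (i+1) with hb
    have hb0 : 0 < b := lt_of_lt_of_le (by positivity) hb1
    have hden : 0 < 1 + l*b := by nlinarith
    have h1 : 1 - a i ≤ l*b/(1+l*b) := by
      have he : 1 - 1/(1+l*b) = l*b/(1+l*b) := by field_simp; ring
      have : 1/(1+l*b) ≤ a i := hrec'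
      linarith [he.symm.le]
    calc (1 - a i) * (1 - b) ≤ (l*b/(1+l*b)) * (1-b) := by
          apply mul_le_mul_of_nonneg_right h1 (by linarith)
      _ = l*b*(1-b)/(1+l*b) := by ring
      _ ≤ M := key b hb1 hb2
  -- Induction over pairs
  have hmain : ∀ k : ℕ, 2*k ≤ R → ∏ i ∈ Finset.range (2*k), (1 - a i) ≤ M ^ k := by
    intro k
    induction k with
    | zero => intro _; simp
    | succ n ih =>
      intro hk
      have h2n : 2*n ≤ R := by omega
      have hprod := ih h2n
      have hpair := pair (2*n) (by omega)
      have h0 : ∀ j, j ≤ R → 0 ≤ 1 - a j := by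
        intro j hj; have := (ha j hj).2; linarith
      have hnn : 0 ≤ ∏ i ∈ Finset.range (2*n), (1 - a i) := by
        apply Finset.prod_nonneg
        intro i hi
        exact h0 i (by simp at hi; omega)
      have hpn : 0 ≤ (1 - a (2*n)) * (1 - a (2*n+1)) :=
        mul_nonneg (h0 _ (by omega)) (h0 _ (by omega))
      rw [show 2*(n+1) = (2*n+1)+1 by ring, Finset.prod_range_succ, Finset.prod_range_succ]
      calc (∏ i ∈ Finset.range (2*n), (1 - a i)) * (1 - a (2*n)) * (1 - a (2*n+1))
          = (∏ i ∈ Finset.range (2*n), (1 - a i)) * ((1 - a (2*n)) * (1 - a (2*n+1))) := by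
            ring
        _ ≤ M ^ n * M := mul_le_mul hprod hpair hpn (pow_nonneg hM0 n)
        _ = M ^ (n+1) := by ring
  obtain ⟨m, hm⟩ := hRe
  have hfin := hmain m (by omega)
  rw [show 2*m = R by omega] at hfin
  rw [show R/2 = m by omega]
  exact hfin
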